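/- First integrability condition (equation (6), flat space). Let n ≥ 3, and let W_{abcd} (twice continuously differentiable) and L_{abc} (three times continuously differentiable, with L_{abc} = L_{[ab]c} and L_{ab}^{b} = 0) be tensor fields on flat ℝⁿ satisfying equation (5). Then W^{[ab}_{[cd;e]}^{f]} = −(4/(n−2)) δ^{[a}_{[c} ( L^{b|i|}_{d;|i|e]}^{f]} + L_{d}^{|i|b}_{;|i|e]}^{f]} ), where the antisymmetrizations are over the upper indices a, b, f and the lower indices c, d, e. -/

import Mathlib

open scoped ContDiff

noncomputable section

/-- Partial derivative `∂ᵢ f` of a scalar field on flat `ℝⁿ` (points represented as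
`Fin n → ℝ`, standard coordinates) in the `i`-th coordinate direction.  In Cartesian
coordinates on flat space this is the covariant derivative `;i`. -/
def pd {n : ℕ} (i : Fin n) (f : (Fin n → ℝ) → ℝ) : (Fin n → ℝ) → ℝ :=
  fun x => fderiv ℝ f x (Pi.single i 1)

/-- Components `η_{ab}` of the constant diagonal metric with diagonal entries `η a = ±1`;
since the entries are `±1` these coincide with the components `η^{ab}` of the inverse
metric. -/
def gm {n : ℕ} (η : Fin n → ℝ) (a b : Fin n) : ℝ := if a = b then η a else 0

/-- Antisymmetrization over two index slots. -/
def asym2 {n : ℕ} (T : Fin n → Fin n → ℝ) (a b : Fin n) : ℝ := (T a b - T b a) / 2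

/-- Antisymmetrization over three index slots. -/
def asym3 {n : ℕ} (T : Fin n → Fin n → Fin n → ℝ) (a b c : Fin n) : ℝ :=
  (T a b c - T a c b - T b a c + T b c a + T c a b - T c b a) / 6

/-- Simultaneous antisymmetrization over a pair of upper slots and a pair of lower slots. -/
def asym22 {n : ℕ} (T : Fin n → Fin n → Fin n → Fin n → ℝ) (a b c d : Fin n) : ℝ :=
  (T a b c d - T b a c d - T a b d c + T b a d c) / 4

/-- Simultaneous antisymmetrization over a triple of upper slots and a triple of lower
slots (arguments ordered as `T upper₁ upper₂ upper₃ lower₁ lower₂ lower₃`). -/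
def asym33 {n : ℕ} (T : Fin n → Fin n → Fin n → Fin n → Fin n → Fin n → ℝ)
    (a b f c d e : Fin n) : ℝ :=
  asym3 (fun a b f => asym3 (fun c d e => T a b f c d e) c d e) a b f

/-- A Weyl candidate: a 4-tensor field with the index symmetries (3a)–(3d):
antisymmetry in the first and in the second index pair, symmetry under interchange of the
two pairs, vanishing cyclic sum `W_{a[bcd]} = 0`, and vanishing trace `W^a{}_{bad} = 0`
(the trace being taken with the metric `η`). -/
def WeylCandidate {n : ℕ} (η : Fin n → ℝ)
    (W : (Fin n → ℝ) → Fin n → Fin n → Fin n → Fin n → ℝ) : Prop :=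
  (∀ x a b c d, W x a b c d = - W x b a c d) ∧
  (∀ x a b c d, W x a b c d = - W x a b d c) ∧
  (∀ x a b c d, W x a b c d = W x c d a b) ∧
  (∀ x a b c d, asym3 (fun b c d => W x a b c d) b c d = 0) ∧
  (∀ x b d, ∑ a, η a * W x a b a d = 0)

/-- The right-hand side of the Lanczos potential equation (4), in the equivalent fully
lowered form (the free indices `a b`, raised in the paper, are lowered with the invertible
diagonal metric `η`, which only multiplies each component equation by `η a * η b ≠ 0`).
Each contracted (dummy) index pair carries a factor `η i` coming from the inverse
metric. -/
def rhs4 {n : ℕ} (η : Fin n → ℝ) (L : (Fin n → ℝ) → Fin n → Fin n → Fin n → ℝ)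
    (x : Fin n → ℝ) (a b c d : Fin n) : ℝ :=
  -- 2 L^{ab}{}_{[c;d]}
  (pd d (L · a b c) x - pd c (L · a b d) x)
  -- + 2 L_{cd}{}^{[a;b]}
  + (pd b (L · c d a) x - pd a (L · c d b) x)
  -- − (4/(n−2)) δ^{[a}_{[c} ( L^{b]i}{}_{d];i} − L^{b]i}{}_{|i|;d]} + L_{d]i}{}^{b];i} − L_{d]i}{}^{|i|;b]} )
  - (4 / ((n : ℝ) - 2)) *
      asym22 (fun a b c d =>
        gm η a c *
          ∑ i, η i *
            (pd i (L · b i d) x - pd d (L · b i i) x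
              + pd i (L · d i b) x - pd b (L · d i i) x)) a b c d
  -- + (8/((n−2)(n−1))) δ^{a}_{[c} δ^{b}_{d]} L^{ij}{}_{i;j}
  + (8 / (((n : ℝ) - 2) * ((n : ℝ) - 1))) *
      ((gm η a c * gm η b d - gm η a d * gm η b c) / 2) *
      ∑ i, ∑ j, η i * η j * pd j (L · i j i) x

/-- Equation (4): `L` is a Lanczos potential for `W` (fully lowered, equivalent form). -/
def Eq4 {n : ℕ} (η : Fin n → ℝ)
    (W : (Fin n → ℝ) → Fin n → Fin n → Fin n → Fin n → ℝ)
    (L : (Fin n → ℝ) → Fin n → Fin n → Fin n → ℝ) : Prop :=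
  ∀ x a b c d, W x a b c d = rhs4 η L x a b c d

/-- The right-hand side of equation (5) (equation (4) in the Lanczos algebraic gauge
`L_{ab}{}^b = 0`), fully lowered form:
`2 L^{ab}{}_{[c;d]} + 2 L_{cd}{}^{[a;b]} − (4/(n−2)) δ^{[a}_{[c} ( L^{b]i}{}_{d];i} + L_{d]i}{}^{b];i} )`. -/
def rhs5 {n : ℕ} (η : Fin n → ℝ) (L : (Fin n → ℝ) → Fin n → Fin n → Fin n → ℝ)
    (x : Fin n → ℝ) (a b c d : Fin n) : ℝ :=
  (pd d (L · a b c) x - pd c (L · a b d) x)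
  + (pd b (L · c d a) x - pd a (L · c d b) x)
  - (4 / ((n : ℝ) - 2)) *
      asym22 (fun a b c d =>
        gm η a c * ∑ i, η i * (pd i (L · b i d) x + pd i (L · d i b) x)) a b c d

/-- Equation (5). -/
def Eq5 {n : ℕ} (η : Fin n → ℝ)
    (W : (Fin n → ℝ) → Fin n → Fin n → Fin n → Fin n → ℝ)
    (L : (Fin n → ℝ) → Fin n → Fin n → Fin n → ℝ) : Prop :=
  ∀ x a b c d, W x a b c d = rhs5 η L x a b c d

/-- Constraint (8), fully lowered form:
`W^{[ab}{}_{[cd;e]}{}^{f]} = (1/(n−4)) δ^{[a}_{[c} W^{bf]}{}_{de];i}{}^{i}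
 + (2/(n−4)) δ^{[a}_{[c} W^{|i|b}{}_{de];i}{}^{f]} + (2/(n−4)) δ^{[a}_{[c} W^{bf]}{}_{|i|d;e]}{}^{i}
 + (4/((n−3)(n−4))) δ^{[a}_{[c} δ^{b}_{d} W^{f]i}{}_{e]j;i}{}^{j}`. -/
def Constraint8 {n : ℕ} (η : Fin n → ℝ)
    (W : (Fin n → ℝ) → Fin n → Fin n → Fin n → Fin n → ℝ) : Prop :=
  ∀ x a b f c d e,
    asym33 (fun a b f c d e => pd f (pd e (W · a b c d)) x) a b f c d e =
      (1 / ((n : ℝ) - 4)) *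
          asym33 (fun a b f c d e =>
            gm η a c * ∑ i, η i * pd i (pd i (W · b f d e)) x) a b f c d e
      + (2 / ((n : ℝ) - 4)) *
          asym33 (fun a b f c d e =>
            gm η a c * ∑ i, η i * pd f (pd i (W · i b d e)) x) a b f c d e
      + (2 / ((n : ℝ) - 4)) *
          asym33 (fun a b f c d e =>
            gm η a c * ∑ i, η i * pd i (pd e (W · b f i d)) x) a b f c d e
      + (4 / (((n : ℝ) - 3) * ((n : ℝ) - 4))) *
          asym33 (fun a b f c d e =>
            gm η a c * gm η b d *
              ∑ i, ∑ j, η i * η j * pd j (pd i (W · f i e j)) x) a b f c d e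

/-- Constraint (10), fully lowered form:
`W^{[ab}{}_{cd;i}{}^{|i|e]} + 2 W^{[ab}{}_{i[c;d]}{}^{|i|e]}
 + (4/(n−3)) δ^{[a}_{[c} W^{b|i}{}_{d]j;i}{}^{j|e]} = 0`,
antisymmetrized over the upper indices `a b e` and (where indicated) the lower indices
`c d`. -/
def Constraint10 {n : ℕ} (η : Fin n → ℝ)
    (W : (Fin n → ℝ) → Fin n → Fin n → Fin n → Fin n → ℝ) : Prop :=
  ∀ x a b e c d,
    asym3 (fun a b e =>
      (∑ i, η i * pd e (pd i (pd i (W · a b c d))) x)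
      + 2 * asym2 (fun c d =>
            ∑ i, η i * pd e (pd i (pd d (W · a b i c))) x) c d
      + (4 / ((n : ℝ) - 3)) * asym2 (fun c d =>
            gm η a c *
              ∑ i, ∑ j, η i * η j * pd e (pd j (pd i (W · b i d j))) x) c d) a b e
    = 0

/-! ### Auxiliary lemmas for the proof -/

lemma pd_add {n : ℕ} (i : Fin n) {f g : (Fin n → ℝ) → ℝ} {x : Fin n → ℝ}
    (hf : Differentiable ℝ f) (hg : Differentiable ℝ g) :
    pd i (fun y => f y + g y) x = pd i f x + pd i g x := by
  simp [pd, fderiv_fun_add (hf x) (hg x)]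

lemma pd_sub {n : ℕ} (i : Fin n) {f g : (Fin n → ℝ) → ℝ} {x : Fin n → ℝ}
    (hf : Differentiable ℝ f) (hg : Differentiable ℝ g) :
    pd i (fun y => f y - g y) x = pd i f x - pd i g x := by
  simp [pd, fderiv_fun_sub (hf x) (hg x)]

lemma pd_const_mul {n : ℕ} (i : Fin n) (c : ℝ) {f : (Fin n → ℝ) → ℝ} {x : Fin n → ℝ}
    (hf : Differentiable ℝ f) :
    pd i (fun y => c * f y) x = c * pd i f x := by
  simp [pd, fderiv_const_mul (hf x) c]

lemma pd_div_const {n : ℕ} (i : Fin n) (c : ℝ) {f : (Fin n → ℝ) → ℝ} {x : Fin n → ℝ}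
    (hf : Differentiable ℝ f) :
    pd i (fun y => f y / c) x = pd i f x / c := by
  simp [pd, div_eq_mul_inv, fderiv_mul_const (hf x), mul_comm]

lemma pd_sum {n : ℕ} (i : Fin n) {ι : Type*} (s : Finset ι) {f : ι → (Fin n → ℝ) → ℝ}
    {x : Fin n → ℝ} (hf : ∀ j, Differentiable ℝ (f j)) :
    pd i (fun y => ∑ j ∈ s, f j y) x = ∑ j ∈ s, pd i (f j) x := by
  simp [pd, fderiv_fun_sum (fun j _ => (hf j) x)]

lemma contDiff_pd {n : ℕ} (i : Fin n) {k : WithTop ℕ∞} {f : (Fin n → ℝ) → ℝ}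
    (hf : ContDiff ℝ (k + 1) f) : ContDiff ℝ k (pd i f) := by
  have h1 : ContDiff ℝ k (fderiv ℝ f) := hf.fderiv_right le_rfl
  exact (ContinuousLinearMap.apply ℝ ℝ (Pi.single i 1)).contDiff.comp h1

lemma pd_comm {n : ℕ} {f : (Fin n → ℝ) → ℝ} (hf : ContDiff ℝ 2 f) (i j : Fin n)
    (x : Fin n → ℝ) : pd i (pd j f) x = pd j (pd i f) x := by
  have hd : DifferentiableAt ℝ (fderiv ℝ f) x :=
    ((hf.fderiv_right (m := 1) (by norm_num)).differentiable one_ne_zero) x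
  have hsymm := (hf.contDiffAt (x := x)).isSymmSndFDerivAt (by simp [minSmoothness_of_isRCLikeNormedField])
  have hrep : ∀ u v : Fin n → ℝ,
      fderiv ℝ (fun y => fderiv ℝ f y v) x u = fderiv ℝ (fderiv ℝ f) x u v := by
    intro u v
    rw [fderiv_clm_apply hd (differentiableAt_const v)]
    simp
  show fderiv ℝ (fun y => fderiv ℝ f y (Pi.single j 1)) x (Pi.single i 1)
      = fderiv ℝ (fun y => fderiv ℝ f y (Pi.single i 1)) x (Pi.single j 1)
  rw [hrep, hrep, hsymm]

lemma asym3_zero_23 {n : ℕ} (T : Fin n → Fin n → Fin n → ℝ)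
    (h : ∀ a b c, T a b c = T a c b) (a b c : Fin n) : asym3 T a b c = 0 := by
  simp only [asym3]
  rw [h a b c, h b a c, h c a b]; ring

lemma asym3_zero_13 {n : ℕ} (T : Fin n → Fin n → Fin n → ℝ)
    (h : ∀ a b c, T a b c = T c b a) (a b c : Fin n) : asym3 T a b c = 0 := by
  simp only [asym3]
  rw [h a b c, h a c b, h b a c]; ring

lemma asym33_asym22 {n : ℕ} (T : Fin n → Fin n → Fin n → Fin n → Fin n → Fin n → ℝ)
    (a b f c d e : Fin n) :
    asym33 (fun a b f c d e => asym22 (fun a b c d => T a b c d e f) a b c d) a b f c d e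
      = asym33 (fun a b f c d e => T a b c d e f) a b f c d e := by
  simp only [asym33, asym3, asym22]; ring

/-- One differentiation of the shape of the right-hand side of equation (5). -/
lemma pd_shape {n : ℕ} (η : Fin n → ℝ) (e : Fin n)
    (M : Fin n → Fin n → Fin n → Fin n → (Fin n → ℝ) → ℝ)
    (hM : ∀ j a b c, Differentiable ℝ (M j a b c)) (a b c d : Fin n) (x : Fin n → ℝ) :
    pd e (fun y =>
      (M d a b c y - M c a b d y) + (M b c d a y - M a c d b y)
      - 4 / ((n : ℝ) - 2) *
          asym22 (fun a b c d =>
            gm η a c * ∑ i, η i * (M i b i d y + M i d i b y)) a b c d) x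
    = (pd e (M d a b c) x - pd e (M c a b d) x)
      + (pd e (M b c d a) x - pd e (M a c d b) x)
      - 4 / ((n : ℝ) - 2) *
          asym22 (fun a b c d =>
            gm η a c * ∑ i, η i * (pd e (M i b i d) x + pd e (M i d i b) x)) a b c d := by
  have hsummand : ∀ a b c d i : Fin n,
      Differentiable ℝ (fun y => η i * (M i b i d y + M i d i b y)) :=
    fun a b c d i => ((hM i b i d).add (hM i d i b)).const_mul (η i)
  have hS : ∀ a b c d : Fin n,
      Differentiable ℝ (fun y => ∑ i, η i * (M i b i d y + M i d i b y)) :=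
    fun a b c d => Differentiable.fun_sum (fun i _ => hsummand a b c d i)
  have hT : ∀ a b c d : Fin n,
      Differentiable ℝ (fun y => gm η a c * ∑ i, η i * (M i b i d y + M i d i b y)) :=
    fun a b c d => (hS a b c d).const_mul _
  have hpdT : ∀ a b c d : Fin n,
      pd e (fun y => gm η a c * ∑ i, η i * (M i b i d y + M i d i b y)) x
        = gm η a c * ∑ i, η i * (pd e (M i b i d) x + pd e (M i d i b) x) := by
    intro a b c d
    rw [pd_const_mul e _ (hS a b c d), pd_sum e Finset.univ (fun i => hsummand a b c d i)]
    congr 1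
    refine Finset.sum_congr rfl fun i _ => ?_
    rw [pd_const_mul e _ ((hM i b i d).fun_add (hM i d i b)), pd_add e (hM i b i d) (hM i d i b)]
  simp only [asym22]
  have h12 : Differentiable ℝ (fun y => M d a b c y - M c a b d y) :=
    (hM _ _ _ _).sub (hM _ _ _ _)
  have h34 : Differentiable ℝ (fun y => M b c d a y - M a c d b y) :=
    (hM _ _ _ _).sub (hM _ _ _ _)
  have hnum : Differentiable ℝ (fun y =>
      gm η a c * ∑ i, η i * (M i b i d y + M i d i b y)
      - gm η b c * ∑ i, η i * (M i a i d y + M i d i a y)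
      - gm η a d * ∑ i, η i * (M i b i c y + M i c i b y)
      + gm η b d * ∑ i, η i * (M i a i c y + M i c i a y)) :=
    (((hT a b c d).sub (hT b a c d)).sub (hT a b d c)).add (hT b a d c)
  have hU : Differentiable ℝ (fun y =>
      (gm η a c * ∑ i, η i * (M i b i d y + M i d i b y)
      - gm η b c * ∑ i, η i * (M i a i d y + M i d i a y)
      - gm η a d * ∑ i, η i * (M i b i c y + M i c i b y)
      + gm η b d * ∑ i, η i * (M i a i c y + M i c i a y)) / 4) := by
    simp only [div_eq_mul_inv]
    exact hnum.mul_const _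
  rw [pd_sub e (h12.fun_add h34) (hU.const_mul _), pd_add e h12 h34,
    pd_sub e (hM d a b c) (hM c a b d), pd_sub e (hM b c d a) (hM a c d b),
    pd_const_mul e _ hU, pd_div_const e 4 hnum,
    pd_add e (((hT a b c d).fun_sub (hT b a c d)).fun_sub (hT a b d c)) (hT b a d c),
    pd_sub e ((hT a b c d).fun_sub (hT b a c d)) (hT a b d c),
    pd_sub e (hT a b c d) (hT b a c d),
    hpdT a b c d, hpdT b a c d, hpdT a b d c, hpdT b a d c]

/-- **First integrability condition (equation (6), flat space).**  If `W` (`C²`) and `L`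
(`C³`, `L_{abc} = L_{[ab]c}`, `L_{ab}{}^b = 0`) satisfy equation (5) on flat `ℝⁿ`, then
`W^{[ab}{}_{[cd;e]}{}^{f]}
  = −(4/(n−2)) δ^{[a}_{[c} ( L^{b|i|}{}_{d;|i|e]}{}^{f]} + L_{d}{}^{|i|b}{}_{;|i|e]}{}^{f]} )`. -/
theorem first_integrability_condition
    (n : ℕ) (hn : 3 ≤ n) (η : Fin n → ℝ) (hη : ∀ i, η i = 1 ∨ η i = -1)
    (W : (Fin n → ℝ) → Fin n → Fin n → Fin n → Fin n → ℝ)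
    (hWC2 : ∀ a b c d, ContDiff ℝ 2 (fun x => W x a b c d))
    (L : (Fin n → ℝ) → Fin n → Fin n → Fin n → ℝ)
    (hLC3 : ∀ a b c, ContDiff ℝ 3 (fun x => L x a b c))
    (hLasym : ∀ x a b c, L x a b c = - L x b a c)
    (hgauge : ∀ x a, ∑ b, η b * L x a b b = 0)
    (hEq5 : Eq5 η W L) :
    ∀ x a b f c d e,
      asym33 (fun a b f c d e => pd f (pd e (W · a b c d)) x) a b f c d e =
        -(4 / ((n : ℝ) - 2)) *
          asym33 (fun a b f c d e =>
            gm η a c *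
              ∑ i, η i *
                (pd f (pd e (pd i (L · b i d))) x
                  + pd f (pd e (pd i (L · d i b))) x)) a b f c d e := by
  intro x a b f c d e
  -- smoothness bookkeeping
  have hL3' : ∀ a b c : Fin n, ContDiff ℝ ((2 : WithTop ℕ∞) + 1) (fun y => L y a b c) := by
    intro a b c
    have h : ((2 : WithTop ℕ∞) + 1) = 3 := by norm_num
    rw [h]; exact hLC3 a b c
  have hC2 : ∀ (j a b c : Fin n), ContDiff ℝ 2 (pd j (fun y => L y a b c)) :=
    fun j a b c => contDiff_pd j (hL3' a b c)
  have hC1 : ∀ (e j a b c : Fin n), ContDiff ℝ 1 (pd e (pd j (fun y => L y a b c))) := by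
    intro e j a b c
    refine contDiff_pd e ?_
    have h : ((1 : WithTop ℕ∞) + 1) = 2 := by norm_num
    rw [h]; exact hC2 j a b c
  have hM1 : ∀ (j a b c : Fin n), Differentiable ℝ (pd j (fun y => L y a b c)) :=
    fun j a b c => (hC2 j a b c).differentiable (by norm_num)
  have hM2 : ∀ (e j a b c : Fin n), Differentiable ℝ (pd e (pd j (fun y => L y a b c))) :=
    fun e j a b c => (hC1 e j a b c).differentiable one_ne_zero
  -- commuting third derivatives
  have hswap_inner : ∀ (g : (Fin n → ℝ) → ℝ), ContDiff ℝ 2 g → ∀ (u v w : Fin n) (x),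
      pd w (pd v (pd u g)) x = pd w (pd u (pd v g)) x := by
    intro g hg u v w x
    exact congrArg (fun h => pd w h x) (funext fun y => pd_comm hg v u y)
  have hswap_outer : ∀ (a b c : Fin n) (u v w : Fin n) (x),
      pd w (pd v (pd u (fun y => L y a b c))) x
        = pd u (pd v (pd w (fun y => L y a b c))) x := by
    intro a b c u v w x
    have h2 : ContDiff ℝ 2 (fun y => L y a b c) := (hLC3 a b c).of_le (by norm_num)
    calc pd w (pd v (pd u (fun y => L y a b c))) x
        = pd w (pd u (pd v (fun y => L y a b c))) x := hswap_inner _ h2 u v w x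
      _ = pd u (pd w (pd v (fun y => L y a b c))) x := pd_comm (hC2 v a b c) w u x
      _ = pd u (pd v (pd w (fun y => L y a b c))) x := (hswap_inner _ h2 w v u x).symm
  -- the key computation: two derivatives of equation (5)
  have hkey : ∀ a b f c d e : Fin n,
      pd f (pd e (fun y => W y a b c d)) x =
        (pd f (pd e (pd d (fun y => L y a b c))) x
            - pd f (pd e (pd c (fun y => L y a b d))) x)
        + (pd f (pd e (pd b (fun y => L y c d a))) x
            - pd f (pd e (pd a (fun y => L y c d b))) x)
        - 4 / ((n : ℝ) - 2) *
            asym22 (fun a b c d =>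
              gm η a c * ∑ i, η i *
                (pd f (pd e (pd i (fun y => L y b i d))) x
                  + pd f (pd e (pd i (fun y => L y d i b))) x)) a b c d := by
    intro a b f c d e
    have hw : (fun y => W y a b c d) = fun y => rhs5 η L y a b c d :=
      funext fun y => hEq5 y a b c d
    have h2 : pd e (fun y => rhs5 η L y a b c d)
        = fun y =>
            (pd e (pd d (fun z => L z a b c)) y - pd e (pd c (fun z => L z a b d)) y)
            + (pd e (pd b (fun z => L z c d a)) y - pd e (pd a (fun z => L z c d b)) y)
            - 4 / ((n : ℝ) - 2) *
                asym22 (fun a b c d =>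
                  gm η a c * ∑ i, η i *
                    (pd e (pd i (fun z => L z b i d)) y
                      + pd e (pd i (fun z => L z d i b)) y)) a b c d :=
      funext fun y =>
        pd_shape η e (fun j a b c => pd j (fun z => L z a b c))
          (fun j a b c => hM1 j a b c) a b c d y
    rw [hw, h2]
    exact pd_shape η f (fun j a b c => pd e (pd j (fun z => L z a b c)))
      (fun j a b c => hM2 e j a b c) a b c d x
  have hfun : (fun (a b f c d e : Fin n) => pd f (pd e (fun y => W y a b c d)) x)
      = (fun (a b f c d e : Fin n) =>
        (pd f (pd e (pd d (fun y => L y a b c))) x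
            - pd f (pd e (pd c (fun y => L y a b d))) x)
        + (pd f (pd e (pd b (fun y => L y c d a))) x
            - pd f (pd e (pd a (fun y => L y c d b))) x)
        - 4 / ((n : ℝ) - 2) *
            asym22 (fun a b c d =>
              gm η a c * ∑ i, η i *
                (pd f (pd e (pd i (fun y => L y b i d))) x
                  + pd f (pd e (pd i (fun y => L y d i b))) x)) a b c d) := by
    funext a b f c d e; exact hkey a b f c d e
  rw [hfun]
  have hsplit : asym33 (fun (a b f c d e : Fin n) =>
        (pd f (pd e (pd d (fun y => L y a b c))) x
            - pd f (pd e (pd c (fun y => L y a b d))) x)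
        + (pd f (pd e (pd b (fun y => L y c d a))) x
            - pd f (pd e (pd a (fun y => L y c d b))) x)
        - 4 / ((n : ℝ) - 2) *
            asym22 (fun a b c d =>
              gm η a c * ∑ i, η i *
                (pd f (pd e (pd i (fun y => L y b i d))) x
                  + pd f (pd e (pd i (fun y => L y d i b))) x)) a b c d) a b f c d e
      = asym33 (fun a b f c d e => pd f (pd e (pd d (fun y => L y a b c))) x) a b f c d e
      - asym33 (fun a b f c d e => pd f (pd e (pd c (fun y => L y a b d))) x) a b f c d e
      + asym33 (fun a b f c d e => pd f (pd e (pd b (fun y => L y c d a))) x) a b f c d e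
      - asym33 (fun a b f c d e => pd f (pd e (pd a (fun y => L y c d b))) x) a b f c d e
      - 4 / ((n : ℝ) - 2) *
          asym33 (fun a b f c d e =>
            asym22 (fun a b c d =>
              gm η a c * ∑ i, η i *
                (pd f (pd e (pd i (fun y => L y b i d))) x
                  + pd f (pd e (pd i (fun y => L y d i b))) x)) a b c d) a b f c d e := by
    simp only [asym33, asym3]; ring
  have hA1 : asym33 (fun a b f c d e => pd f (pd e (pd d (fun y => L y a b c))) x)
      a b f c d e = 0 := by
    have h0 : ∀ a' b' f' : Fin n,
        asym3 (fun c d e => pd f' (pd e (pd d (fun y => L y a' b' c))) x) c d e = 0 :=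
      fun a' b' f' => asym3_zero_23 _
        (fun c' d' e' => hswap_inner _ ((hLC3 a' b' c').of_le (by norm_num)) d' e' f' x) c d e
    unfold asym33
    rw [show (fun a' b' f' => asym3
        (fun c d e => pd f' (pd e (pd d (fun y => L y a' b' c))) x) c d e)
      = (fun _ _ _ : Fin n => (0 : ℝ)) from
        funext fun a' => funext fun b' => funext fun f' => h0 a' b' f']
    simp [asym3]
  have hA2 : asym33 (fun a b f c d e => pd f (pd e (pd c (fun y => L y a b d))) x)
      a b f c d e = 0 := by
    have h0 : ∀ a' b' f' : Fin n,
        asym3 (fun c d e => pd f' (pd e (pd c (fun y => L y a' b' d))) x) c d e = 0 :=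
      fun a' b' f' => asym3_zero_13 _
        (fun c' d' e' => hswap_inner _ ((hLC3 a' b' d').of_le (by norm_num)) c' e' f' x) c d e
    unfold asym33
    rw [show (fun a' b' f' => asym3
        (fun c d e => pd f' (pd e (pd c (fun y => L y a' b' d))) x) c d e)
      = (fun _ _ _ : Fin n => (0 : ℝ)) from
        funext fun a' => funext fun b' => funext fun f' => h0 a' b' f']
    simp [asym3]
  have hA3 : asym33 (fun a b f c d e => pd f (pd e (pd b (fun y => L y c d a))) x)
      a b f c d e = 0 := by
    unfold asym33
    refine asym3_zero_23 _ ?_ a b f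
    intro a' b' f'
    exact congrArg (fun T => asym3 T c d e)
      (funext fun c' => funext fun d' => funext fun e' => hswap_outer c' d' a' b' e' f' x)
  have hA4 : asym33 (fun a b f c d e => pd f (pd e (pd a (fun y => L y c d b))) x)
      a b f c d e = 0 := by
    unfold asym33
    refine asym3_zero_13 _ ?_ a b f
    intro a' b' f'
    exact congrArg (fun T => asym3 T c d e)
      (funext fun c' => funext fun d' => funext fun e' => hswap_outer c' d' b' a' e' f' x)
  have hAU : asym33 (fun (a b f c d e : Fin n) =>
        asym22 (fun a b c d =>
          gm η a c * ∑ i, η i *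
            (pd f (pd e (pd i (fun y => L y b i d))) x
              + pd f (pd e (pd i (fun y => L y d i b))) x)) a b c d) a b f c d e
      = asym33 (fun (a b f c d e : Fin n) =>
          gm η a c * ∑ i, η i *
            (pd f (pd e (pd i (fun y => L y b i d))) x
              + pd f (pd e (pd i (fun y => L y d i b))) x)) a b f c d e :=
    asym33_asym22 _ a b f c d e
  rw [hsplit, hA1, hA2, hA3, hA4, hAU]
  ring
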